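/- Let G be a connected abstract multi-digraph with at least one edge. Then there exists an edge e of G such that G ∖ {e} is still strongly connected. -/

import Mathlib

set_option linter.unusedSectionVars false
set_option maxHeartbeats 1000000

namespace RemovableAux

variable {V E : Type}

def Stp (src tgt : E → V) (A : Set E) (a b : V) : Prop :=
  ∃ e ∈ A, src e = a ∧ tgt e = b

abbrev Reach (src tgt : E → V) (A : Set E) (a b : V) : Prop :=
  Relation.ReflTransGen (Stp src tgt A) a b

inductive IsWalk (src tgt : E → V) : V → V → List E → Prop
  | nil (a : V) : IsWalk src tgt a a []
  | cons {a b : V} {e : E} {l : List E} (h : src e = a) (hw : IsWalk src tgt (tgt e) b l) :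
      IsWalk src tgt a b (e :: l)

variable {src tgt : E → V}

theorem IsWalk.append {a b c : V} {l₁ l₂ : List E} (h₁ : IsWalk src tgt a b l₁)
    (h₂ : IsWalk src tgt b c l₂) : IsWalk src tgt a c (l₁ ++ l₂) := by
  induction h₁ with
  | nil => simpa
  | cons h hw ih => exact .cons h (ih h₂)

theorem IsWalk.split {a c : V} {l₁ l₂ : List E} (h : IsWalk src tgt a c (l₁ ++ l₂)) :
    ∃ b, IsWalk src tgt a b l₁ ∧ IsWalk src tgt b c l₂ := by
  induction l₁ generalizing a with
  | nil => exact ⟨a, .nil a, by simpa using h⟩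
  | cons e l ih =>
    rcases h with _ | ⟨he, hw⟩
    obtain ⟨b, hb1, hb2⟩ := ih hw
    exact ⟨b, .cons he hb1, hb2⟩

theorem reach_iff_walk {A : Set E} {a b : V} :
    Reach src tgt A a b ↔ ∃ l, IsWalk src tgt a b l ∧ ∀ e ∈ l, e ∈ A := by
  constructor
  · intro h
    induction h with
    | refl => exact ⟨[], .nil a, by simp⟩
    | tail _ hs ih =>
      obtain ⟨l, hw, hl⟩ := ih
      obtain ⟨e, he, hse, hte⟩ := hs
      refine ⟨l ++ [e], hw.append (hse ▸ hte ▸ .cons rfl (.nil _)), ?_⟩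
      simp only [List.mem_append, List.mem_singleton]
      rintro f (hf | rfl)
      exacts [hl f hf, he]
  · rintro ⟨l, hw, hl⟩
    induction hw with
    | nil => exact .refl
    | cons he hw ih =>
      refine .head ⟨_, hl _ (by simp), he, rfl⟩ (ih fun e he => hl e (by simp [he]))

theorem reach_mono {A B : Set E} (hAB : A ⊆ B) {a b : V} (h : Reach src tgt A a b) :
    Reach src tgt B a b := by
  induction h with
  | refl => exact .refl
  | tail _ hs ih => exact ih.tail ⟨hs.choose, hAB hs.choose_spec.1, hs.choose_spec.2⟩

theorem splice {e : E} (h : Reach src tgt {x | x ≠ e} (src e) (tgt e)) {a b : V}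
    (hab : Reach src tgt Set.univ a b) : Reach src tgt {x | x ≠ e} a b := by
  induction hab with
  | refl => exact .refl
  | tail _ hs ih =>
    obtain ⟨f, -, hsf, htf⟩ := hs
    by_cases hfe : f = e
    · subst hfe
      exact ih.trans (hsf ▸ htf ▸ h)
    · exact ih.tail ⟨f, hfe, hsf, htf⟩

theorem IsWalk.tgt_last {a b : V} {l : List E} (h : IsWalk src tgt a b l) (hl : l ≠ []) :
    ∃ e ∈ l, tgt e = b := by
  induction h with
  | nil => exact absurd rfl hl
  | @cons a b e l he hw ih =>
    rcases Classical.em (l = []) with h0 | h0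
    · subst h0
      rcases hw with _ | _
      exact ⟨_, by simp, rfl⟩
    · obtain ⟨f, hel, hte⟩ := ih h0
      exact ⟨f, by simp [hel], hte⟩

theorem IsWalk.head_src {a b : V} {e : E} {l : List E} (h : IsWalk src tgt a b (e :: l)) :
    src e = a := by
  rcases h with _ | ⟨he, _⟩; exact he

theorem IsWalk.map_tgt {a b : V} {l : List E} (h : IsWalk src tgt a b l) (hl : l ≠ []) :
    l.map tgt = (l.map src).tail ++ [b] := by
  induction h with
  | nil => exact absurd rfl hl
  | @cons a b e l he hw ih =>
    rcases Classical.em (l = []) with h0 | h0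
    · subst h0
      rcases hw with _ | _
      simp
    · obtain ⟨f, l', rfl⟩ := List.exists_cons_of_ne_nil h0
      have hsf : src f = tgt e := hw.head_src
      simp only [List.map_cons, List.tail_cons] at ih ⊢
      rw [ih h0, hsf, List.cons_append]


theorem shorten {a : V} {l : List E} (hw : IsWalk src tgt a a l)
    (hnd : ¬ (l.map src).Nodup) :
    ∃ (a' : V) (l' : List E), IsWalk src tgt a' a' l' ∧ l' ≠ [] ∧ l'.length < l.length := by
  classical
  rw [List.nodup_iff_count_le_one] at hnd
  push_neg at hnd
  obtain ⟨x, hx⟩ := hnd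
  have hxmem : x ∈ l.map src := by
    by_contra h
    rw [List.count_eq_zero_of_not_mem h] at hx
    omega
  obtain ⟨e, hel, hsex⟩ := List.mem_map.mp hxmem
  obtain ⟨m₁, r, rfl⟩ := List.append_of_mem hel
  have hcnt : List.count x (m₁.map src) + 1 + List.count x (r.map src) ≥ 2 := by
    have : List.count x ((m₁ ++ e :: r).map src)
        = List.count x (m₁.map src) + 1 + List.count x (r.map src) := by
      simp [List.count_append, hsex, add_comm, add_assoc, add_left_comm]
    omega
  have hcase : x ∈ r.map src ∨ x ∈ m₁.map src := by
    by_contra h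
    push_neg at h
    rw [List.count_eq_zero_of_not_mem h.1, List.count_eq_zero_of_not_mem h.2] at hcnt
    omega
  rcases hcase with hxr | hxm
  · obtain ⟨f, hfr, hsfx⟩ := List.mem_map.mp hxr
    obtain ⟨r₁, r₂, rfl⟩ := List.append_of_mem hfr
    have hw' : IsWalk src tgt a a (m₁ ++ ((e :: r₁) ++ (f :: r₂))) := by
      simpa using hw
    obtain ⟨p, hp1, hp2⟩ := hw'.split
    obtain ⟨q, hq1, hq2⟩ := hp2.split
    have hpq : p = q := by
      rw [← hq1.head_src, ← hq2.head_src, hsex, hsfx]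
    refine ⟨p, e :: r₁, hpq ▸ hq1, by simp, ?_⟩
    simp
    omega
  · obtain ⟨g, hgm, hsgx⟩ := List.mem_map.mp hxm
    obtain ⟨s, t, rfl⟩ := List.append_of_mem hgm
    have hw' : IsWalk src tgt a a (s ++ ((g :: t) ++ (e :: r))) := by
      simpa using hw
    obtain ⟨p, hp1, hp2⟩ := hw'.split
    obtain ⟨q, hq1, hq2⟩ := hp2.split
    have hpq : p = q := by
      rw [← hq1.head_src, ← hq2.head_src, hsex, hsgx]
    refine ⟨p, g :: t, hpq ▸ hq1, by simp, ?_⟩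
    simp
    omega

theorem exists_cycle_aux (n : ℕ) :
    ∀ (a : V) (l : List E), l.length ≤ n → IsWalk src tgt a a l → l ≠ [] →
    ∃ a' l', IsWalk src tgt a' a' l' ∧ l' ≠ [] ∧ (l'.map src).Nodup := by
  induction n with
  | zero =>
    intro a l hlen hw hne
    interval_cases h : l.length
    · exact absurd (List.length_eq_zero_iff.mp h) hne
  | succ n ih =>
    intro a l hlen hw hne
    by_cases hnd : (l.map src).Nodup
    · exact ⟨a, l, hw, hne, hnd⟩
    · obtain ⟨a', l', hw', hne', hlt⟩ := shorten hw hnd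
      exact ih a' l' (by omega) hw' hne'

/-- From a closed nonempty walk we get a simple cycle. -/
theorem exists_cycle {a : V} {l : List E} (hw : IsWalk src tgt a a l) (hne : l ≠ []) :
    ∃ a' l', IsWalk src tgt a' a' l' ∧ l' ≠ [] ∧ (l'.map src).Nodup :=
  exists_cycle_aux l.length a l le_rfl hw hne

section Cycle

variable {a : V} {l : List E} (hw : IsWalk src tgt a a l) (hne : l ≠ [])

include hw hne

theorem cyc_base_mem : a ∈ l.map src := by
  obtain ⟨e, l', rfl⟩ := List.exists_cons_of_ne_nil hne
  exact List.mem_map.mpr ⟨e, by simp, hw.head_src⟩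

theorem cyc_tgt_mem {e : E} (he : e ∈ l) : tgt e ∈ l.map src := by
  have h1 : tgt e ∈ l.map tgt := List.mem_map_of_mem (f := tgt) he
  rw [hw.map_tgt hne] at h1
  rcases List.mem_append.mp h1 with h | h
  · exact List.mem_of_mem_tail h
  · simp only [List.mem_singleton] at h
    exact h ▸ cyc_base_mem hw hne

theorem cyc_src_mem_tgt {v : V} (hv : v ∈ l.map src) : v ∈ l.map tgt := by
  rw [hw.map_tgt hne]
  obtain ⟨e, l', rfl⟩ := List.exists_cons_of_ne_nil hne
  rcases (by simpa using hv : v = src e ∨ ∃ f ∈ l', src f = v) with h | h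
  · have : v = a := by rw [h, hw.head_src]
    simp [this]
  · obtain ⟨f, hf, hfv⟩ := h
    exact List.mem_append_left _ (by simpa using ⟨f, hf, hfv⟩)

/-- Rotation: closed walk based at any source vertex, with the same edges. -/
theorem cyc_rotate {u : V} (hu : u ∈ l.map src) :
    ∃ l', IsWalk src tgt u u l' ∧ (∀ e, e ∈ l' ↔ e ∈ l) ∧
      (∀ v, v ∈ l'.map src ↔ v ∈ l.map src) := by
  obtain ⟨e, hel, hseu⟩ := List.mem_map.mp hu
  obtain ⟨m₁, m₂, rfl⟩ := List.append_of_mem hel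
  obtain ⟨p, hp1, hp2⟩ := hw.split
  have hpu : p = u := by rw [← hp2.head_src, hseu]
  subst hpu
  have hperm : ((e :: m₂) ++ m₁).Perm (m₁ ++ e :: m₂) := List.perm_append_comm
  exact ⟨(e :: m₂) ++ m₁, hp2.append hp1, fun f => hperm.mem_iff,
    fun v => (hperm.map src).mem_iff⟩

theorem reachCyc {u w : V} (hu : u ∈ l.map src) (hwm : w ∈ l.map src) :
    Reach src tgt {x | x ∈ l} u w := by
  obtain ⟨l', hw', hmem, hsrcs⟩ := cyc_rotate hw hne hu
  obtain ⟨f, hfl', hsfw⟩ := List.mem_map.mp ((hsrcs w).mpr hwm)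
  obtain ⟨q₁, q₂, rfl⟩ := List.append_of_mem hfl'
  obtain ⟨p, hp1, hp2⟩ := hw'.split
  have hpw : p = w := by rw [← hp2.head_src, hsfw]
  subst hpw
  exact reach_iff_walk.mpr ⟨q₁, hp1, fun x hx => (hmem x).mp (by simp [hx])⟩

end Cycle

theorem nodup_map_tgt {a : V} {l : List E} (hw : IsWalk src tgt a a l) (hne : l ≠ [])
    (hnd : (l.map src).Nodup) : (l.map tgt).Nodup := by
  rw [hw.map_tgt hne]
  obtain ⟨e, l', rfl⟩ := List.exists_cons_of_ne_nil hne
  have hcons : ((e :: l').map src) = a :: ((e :: l').map src).tail := by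
    simp [hw.head_src]
  rw [hcons, List.nodup_cons] at hnd
  simp only [List.map_cons, List.tail_cons] at hnd ⊢
  rw [List.nodup_append]
  refine ⟨hnd.2, List.nodup_singleton a, fun x hx y hy hxy => ?_⟩
  rw [List.mem_singleton] at hy
  exact hnd.1 (by rw [← hy, ← hxy]; exact hx)

section Contract

variable (src tgt : E → V) (a : V) (l : List E)

abbrev CVert : Type := {v : V // v ∉ l.map src ∨ v = a}

abbrev CEdge : Type := {e : E // e ∉ l}

set_option linter.unusedSectionVars false

variable [DecidableEq V] [DecidableEq E]

instance : DecidableEq (CVert src a l) := fun u v =>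
  decidable_of_iff (u.1 = v.1) Subtype.ext_iff.symm

instance : DecidableEq (CEdge (E := E) l) := fun u v =>
  decidable_of_iff (u.1 = v.1) Subtype.ext_iff.symm

instance [Fintype V] : Fintype (CVert src a l) :=
  inferInstanceAs (Fintype {v : V // v ∉ l.map src ∨ v = a})

instance [Fintype E] : Fintype (CEdge (E := E) l) :=
  inferInstanceAs (Fintype {e : E // e ∉ l})

def proj (v : V) : CVert src a l :=
  if h : v ∈ l.map src then ⟨a, Or.inr rfl⟩ else ⟨v, Or.inl h⟩

def csrc (e : CEdge (E := E) l) : CVert src a l := proj src a l (src e.1)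

def ctgt (e : CEdge (E := E) l) : CVert src a l := proj src a l (tgt e.1)

theorem proj_eq_iff (ha : a ∈ l.map src) (u w : V) :
    proj src a l u = proj src a l w ↔ (u = w ∨ (u ∈ l.map src ∧ w ∈ l.map src)) := by
  unfold proj
  split_ifs with h1 h2 h2
  · simp [h1, h2]
  · rw [Subtype.mk.injEq]
    constructor
    · rintro rfl; exact absurd ha h2
    · rintro (rfl | ⟨-, hww⟩); exacts [absurd h1 h2, absurd hww h2]
  · rw [Subtype.mk.injEq]
    constructor
    · rintro rfl; exact absurd ha h1
    · rintro (rfl | ⟨hu, -⟩); exacts [absurd h2 h1, absurd hu h1]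
  · rw [Subtype.mk.injEq]
    simp [h1, h2]

theorem proj_self (v' : CVert src a l) : proj src a l v'.1 = v' := by
  obtain ⟨v, hv⟩ := v'
  rcases hv with hv | hv
  · unfold proj; rw [dif_neg hv]
  · subst hv
    unfold proj
    split_ifs with h
    · rfl
    · rfl

theorem proj_of_mem {v : V} (hv : v ∈ l.map src) : proj src a l v = ⟨a, Or.inr rfl⟩ :=
  dif_pos hv

theorem proj_of_not_mem {v : V} (hv : v ∉ l.map src) : (proj src a l v).1 = v := by
  unfold proj; rw [dif_neg hv]

end Contract

section ContractLemmas

variable [DecidableEq V] [DecidableEq E]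
variable {a : V} {l : List E}
variable (hw : IsWalk src tgt a a l) (hne : l ≠ [])

include hw hne

theorem projconn {u w : V} (h : proj src a l u = proj src a l w) {e : E} (he : e ∉ l) :
    Reach src tgt {x | x ≠ e} u w := by
  rcases (proj_eq_iff src a l (cyc_base_mem hw hne) u w).mp h with rfl | ⟨hu, hww⟩
  · exact .refl
  · refine reach_mono ?_ (reachCyc hw hne hu hww)
    intro x hx
    show x ≠ e
    intro hxe
    exact he (hxe ▸ hx)

theorem push_reach {u w : V} (h : Reach src tgt Set.univ u w) :
    Reach (csrc src a l) (ctgt src tgt a l) Set.univ (proj src a l u) (proj src a l w) := by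
  induction h with
  | refl => exact .refl
  | @tail x w hux hs ih =>
    obtain ⟨f, -, hsf, htf⟩ := hs
    by_cases hfl : f ∈ l
    · have : proj src a l x = proj src a l w := by
        rw [proj_eq_iff src a l (cyc_base_mem hw hne)]
        exact Or.inr ⟨hsf ▸ List.mem_map_of_mem (f := src) hfl, htf ▸ cyc_tgt_mem hw hne hfl⟩
      exact this ▸ ih
    · exact ih.tail ⟨⟨f, hfl⟩, trivial, by simp [csrc, hsf], by simp [ctgt, htf]⟩

theorem lift_reach {e' : CEdge (E := E) l} {a' b' : CVert src a l}
    (h : Reach (csrc src a l) (ctgt src tgt a l) {x | x ≠ e'} a' b') :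
    ∀ u w : V, proj src a l u = a' → proj src a l w = b' →
      Reach src tgt {x | x ≠ e'.1} u w := by
  induction h with
  | refl =>
    intro u w hu hww
    exact projconn hw hne (hu.trans hww.symm) e'.2
  | @tail c' b' hac hs ih =>
    intro u w hu hww
    obtain ⟨f', hf'ne, hsf', htf'⟩ := hs
    have h1 : Reach src tgt {x | x ≠ e'.1} u (src f'.1) := by
      refine ih u (src f'.1) hu ?_
      exact hsf'
    have hf1 : f'.1 ≠ e'.1 := fun h => hf'ne (Subtype.ext h)
    have h2 : Reach src tgt {x | x ≠ e'.1} (tgt f'.1) w :=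
      projconn hw hne (htf'.trans hww.symm) e'.2
    exact (h1.tail ⟨f'.1, hf1, rfl, rfl⟩).trans h2

end ContractLemmas

section ContractLemmas2
variable [DecidableEq V] [DecidableEq E]
variable {a : V} {l : List E}
variable (hw : IsWalk src tgt a a l) (hne : l ≠ [])

include hw hne

theorem card_tgt_eq [Fintype E] {v : V} (hv : v ∉ l.map src) :
    (Finset.univ.filter fun e : E => tgt e = v).card
      = (Finset.univ.filter fun e' : CEdge (E := E) l =>
          ctgt src tgt a l e' = proj src a l v).card := by
  refine Finset.card_bij'
    (fun e he => (⟨e, fun hmem => hv (by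
        have h2 := (Finset.mem_filter.mp he).2
        exact h2 ▸ cyc_tgt_mem hw hne hmem)⟩ : CEdge (E := E) l))
    (fun e' _ => e'.1) ?_ ?_ ?_ ?_
  · intro e he
    rw [Finset.mem_filter]
    exact ⟨Finset.mem_univ _, by simp only [ctgt, (Finset.mem_filter.mp he).2]⟩
  · intro e' he'
    rw [Finset.mem_filter]
    refine ⟨Finset.mem_univ _, ?_⟩
    have h2 := (Finset.mem_filter.mp he').2
    rcases (proj_eq_iff src a l (cyc_base_mem hw hne) (tgt e'.1) v).mp h2 with h | ⟨-, hvm⟩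
    · exact h
    · exact absurd hvm hv
  · intro e he; rfl
  · intro e' he'; rfl

theorem card_src_eq [Fintype E] {v : V} (hv : v ∉ l.map src) :
    (Finset.univ.filter fun e : E => src e = v).card
      = (Finset.univ.filter fun e' : CEdge (E := E) l =>
          csrc src a l e' = proj src a l v).card := by
  refine Finset.card_bij'
    (fun e he => (⟨e, fun hmem => hv (by
        have h2 := (Finset.mem_filter.mp he).2
        exact h2 ▸ List.mem_map_of_mem (f := src) hmem)⟩ : CEdge (E := E) l))
    (fun e' _ => e'.1) ?_ ?_ ?_ ?_
  · intro e he
    rw [Finset.mem_filter]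
    exact ⟨Finset.mem_univ _, by simp only [csrc, (Finset.mem_filter.mp he).2]⟩
  · intro e' he'
    rw [Finset.mem_filter]
    refine ⟨Finset.mem_univ _, ?_⟩
    have h2 := (Finset.mem_filter.mp he').2
    rcases (proj_eq_iff src a l (cyc_base_mem hw hne) (src e'.1) v).mp h2 with h | ⟨-, hvm⟩
    · exact h
    · exact absurd hvm hv
  · intro e he; rfl
  · intro e' he'; rfl


end ContractLemmas2

theorem key (n : ℕ) :
    ∀ (V E : Type) [Fintype V] [DecidableEq V] [Fintype E] [DecidableEq E]
      (src tgt : E → V), Fintype.card E ≤ n → Nonempty E →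
      (∀ a b : V, Reach src tgt Set.univ a b) →
      (∀ e : E, ¬ Reach src tgt {x | x ≠ e} (src e) (tgt e)) →
      ∃ v : V, (Finset.univ.filter fun e => tgt e = v).card = 1 ∧
        (Finset.univ.filter fun e => src e = v).card = 1 := by
  induction n with
  | zero =>
    intro V E _ _ _ _ src tgt hcard hne_E _ _
    haveI := hne_E
    have := Fintype.card_pos (α := E)
    omega
  | succ n ih =>
    intro V E _ _ _ _ src tgt hcard hne_E hconn hmin
    classical
    have noloop : ∀ e : E, src e ≠ tgt e := fun e h => hmin e (by rw [h])
    obtain ⟨e₀⟩ := hne_E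
    obtain ⟨l₀, hw₀, -⟩ := reach_iff_walk.mp (hconn (tgt e₀) (src e₀))
    obtain ⟨a, l, hw, hne, hnd⟩ := exists_cycle (IsWalk.cons rfl hw₀) (by simp)
    have haC : a ∈ l.map src := cyc_base_mem hw hne
    have hsrcC : ∀ e ∈ l, src e ∈ l.map src := fun e he => List.mem_map_of_mem (f := src) he
    have htgtC : ∀ e ∈ l, tgt e ∈ l.map src := fun e he => cyc_tgt_mem hw hne he
    have hchord : ∀ e : E, src e ∈ l.map src → tgt e ∈ l.map src → e ∈ l := by
      intro e hs ht
      by_contra hel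
      refine hmin e (reach_mono ?_ (reachCyc hw hne hs ht))
      intro x hx
      show x ≠ e
      rintro rfl
      exact hel hx
    have inj_src : ∀ {e f : E}, e ∈ l → f ∈ l → src e = src f → e = f :=
      fun he hf => List.inj_on_of_nodup_map hnd he hf
    have inj_tgt : ∀ {e f : E}, e ∈ l → f ∈ l → tgt e = tgt f → e = f :=
      fun he hf => List.inj_on_of_nodup_map (nodup_map_tgt hw hne hnd) he hf
    by_cases hall : ∀ v : V, v ∈ l.map src
    · -- the whole graph is the cycle : the base vertex is linear
      obtain ⟨f, hfl, hfa⟩ := List.mem_map.mp (cyc_src_mem_tgt hw hne haC)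
      obtain ⟨g, hgl, hga⟩ := List.mem_map.mp haC
      refine ⟨a, ?_, ?_⟩
      · rw [Finset.card_eq_one]
        refine ⟨f, Finset.eq_singleton_iff_unique_mem.mpr ⟨by simp [hfa], ?_⟩⟩
        intro r hr
        rw [Finset.mem_filter] at hr
        exact inj_tgt (hchord r (hall _) (hall _)) hfl (by rw [hr.2, hfa])
      · rw [Finset.card_eq_one]
        refine ⟨g, Finset.eq_singleton_iff_unique_mem.mpr ⟨by simp [hga], ?_⟩⟩
        intro r hr
        rw [Finset.mem_filter] at hr
        exact inj_src (hchord r (hall _) (hall _)) hgl (by rw [hr.2, hga])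
    · push_neg at hall
      obtain ⟨v₀, hv₀⟩ := hall
      have hCEne : Nonempty (CEdge (E := E) l) := by
        obtain ⟨l₁, hw₁, -⟩ := reach_iff_walk.mp (hconn a v₀)
        have hl₁ : l₁ ≠ [] := by
          rintro rfl
          cases hw₁
          exact hv₀ haC
        obtain ⟨e, hel₁, hte⟩ := hw₁.tgt_last hl₁
        exact ⟨⟨e, fun hmem => hv₀ (hte ▸ htgtC e hmem)⟩⟩
      have hcard' : Fintype.card (CEdge (E := E) l) ≤ n := by
        obtain ⟨e₁, l', hl'⟩ := List.exists_cons_of_ne_nil hne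
        have : Fintype.card (CEdge (E := E) l) < Fintype.card E :=
          Fintype.card_subtype_lt (x := e₁) (by simp [hl'])
        omega
      have hconn' : ∀ a' b' : CVert src a l,
          Reach (csrc src a l) (ctgt src tgt a l) Set.univ a' b' := by
        intro a' b'
        have := push_reach hw hne (hconn a'.1 b'.1)
        rwa [proj_self, proj_self] at this
      have hmin' : ∀ e' : CEdge (E := E) l,
          ¬ Reach (csrc src a l) (ctgt src tgt a l) {x | x ≠ e'}
            (csrc src a l e') (ctgt src tgt a l e') := by
        intro e' h'
        exact hmin e'.1 (lift_reach hw hne h' (src e'.1) (tgt e'.1) rfl rfl)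
      obtain ⟨v', hin', hout'⟩ := ih (CVert src a l) (CEdge (E := E) l)
        (csrc src a l) (ctgt src tgt a l) hcard' hCEne hconn' hmin'
      by_cases hva : v'.1 ∈ l.map src
      · -- v' is the contracted cycle vertex
        have hv'eq : v' = (⟨a, Or.inr rfl⟩ : CVert src a l) := by
          rw [← proj_self src a l v', proj_of_mem src a l hva]
        obtain ⟨f', hf'⟩ := Finset.card_eq_one.mp hin'
        obtain ⟨g', hg'⟩ := Finset.card_eq_one.mp hout'
        have hf'mem : ctgt src tgt a l f' = v' := by
          have : f' ∈ Finset.univ.filter fun e' : CEdge (E := E) l =>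
              ctgt src tgt a l e' = v' := by rw [hf']; exact Finset.mem_singleton_self f'
          exact (Finset.mem_filter.mp this).2
        have hg'mem : csrc src a l g' = v' := by
          have : g' ∈ Finset.univ.filter fun e' : CEdge (E := E) l =>
              csrc src a l e' = v' := by rw [hg']; exact Finset.mem_singleton_self g'
          exact (Finset.mem_filter.mp this).2
        have hfC : tgt f'.1 ∈ l.map src := by
          have hpp : proj src a l (tgt f'.1) = proj src a l a := by
            rw [proj_of_mem src a l haC]
            exact hf'mem.trans hv'eq
          rcases (proj_eq_iff src a l haC _ _).mp hpp with h | ⟨h, -⟩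
          · exact h ▸ haC
          · exact h
        have hgC : src g'.1 ∈ l.map src := by
          have hpp : proj src a l (src g'.1) = proj src a l a := by
            rw [proj_of_mem src a l haC]
            exact hg'mem.trans hv'eq
          rcases (proj_eq_iff src a l haC _ _).mp hpp with h | ⟨h, -⟩
          · exact h ▸ haC
          · exact h
        have uniq_f : ∀ h : E, h ∉ l → tgt h ∈ l.map src → h = f'.1 := by
          intro h hh hhC
          have hmem : (⟨h, hh⟩ : CEdge (E := E) l) ∈
              Finset.univ.filter fun e' : CEdge (E := E) l => ctgt src tgt a l e' = v' := by
            rw [Finset.mem_filter]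
            refine ⟨Finset.mem_univ _, ?_⟩
            rw [hv'eq]
            exact proj_of_mem src a l hhC
          rw [hf', Finset.mem_singleton] at hmem
          exact congrArg Subtype.val hmem
        have uniq_g : ∀ h : E, h ∉ l → src h ∈ l.map src → h = g'.1 := by
          intro h hh hhC
          have hmem : (⟨h, hh⟩ : CEdge (E := E) l) ∈
              Finset.univ.filter fun e' : CEdge (E := E) l => csrc src a l e' = v' := by
            rw [Finset.mem_filter]
            refine ⟨Finset.mem_univ _, ?_⟩
            rw [hv'eq]
            exact proj_of_mem src a l hhC
          rw [hg', Finset.mem_singleton] at hmem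
          exact congrArg Subtype.val hmem
        have htg : tgt g'.1 ∉ l.map src := fun h => g'.2 (hchord g'.1 hgC h)
        by_cases hz : ∃ z ∈ l.map src, z ≠ tgt f'.1 ∧ z ≠ src g'.1
        · obtain ⟨z, hzC, hzx, hzy⟩ := hz
          obtain ⟨p, hpl, hpz⟩ := List.mem_map.mp (cyc_src_mem_tgt hw hne hzC)
          obtain ⟨q, hql, hqz⟩ := List.mem_map.mp hzC
          refine ⟨z, ?_, ?_⟩
          · rw [Finset.card_eq_one]
            refine ⟨p, Finset.eq_singleton_iff_unique_mem.mpr ⟨by simp [hpz], ?_⟩⟩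
            intro r hr
            rw [Finset.mem_filter] at hr
            by_cases hrl : r ∈ l
            · exact inj_tgt hrl hpl (by rw [hr.2, hpz])
            · have := uniq_f r hrl (by rw [hr.2]; exact hzC)
              rw [this] at hr
              exact absurd hr.2.symm hzx
          · rw [Finset.card_eq_one]
            refine ⟨q, Finset.eq_singleton_iff_unique_mem.mpr ⟨by simp [hqz], ?_⟩⟩
            intro r hr
            rw [Finset.mem_filter] at hr
            by_cases hrl : r ∈ l
            · exact inj_src hrl hql (by rw [hr.2, hqz])
            · have := uniq_g r hrl (by rw [hr.2]; exact hzC)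
              rw [this] at hr
              exact absurd hr.2.symm hzy
        · push_neg at hz
          obtain ⟨q, hql, hqx⟩ := List.mem_map.mp (cyc_src_mem_tgt hw hne hfC)
          have hsqy : src q = src g'.1 :=
            hz (src q) (hsrcC q hql) (fun h => noloop q (h.trans hqx.symm))
          have claim : ∀ u, Reach src tgt Set.univ u (tgt f'.1) → u ∉ l.map src →
              Reach src tgt {e | e ≠ q} u (tgt f'.1) := by
            intro u hr
            induction hr using Relation.ReflTransGen.head_induction_on with
            | refl => intro hx; exact absurd hfC hx
            | head hstep htail ihh =>
              intro hu
              obtain ⟨h, -, hsh, hth⟩ := hstep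
              have hhl : h ∉ l := fun hmem => hu (hsh ▸ hsrcC h hmem)
              have hhq : h ≠ q := fun hEq => hhl (hEq ▸ hql)
              by_cases hc : tgt h ∈ l.map src
              · have hhf : h = f'.1 := uniq_f h hhl hc
                exact Relation.ReflTransGen.single ⟨h, hhq, hsh, by rw [hhf]⟩
              · exact Relation.ReflTransGen.head ⟨h, hhq, hsh, hth⟩ (ihh (by rwa [← hth]))
          refine absurd ?_ (hmin q)
          rw [hqx, hsqy]
          have hgq : g'.1 ≠ q := fun hEq => g'.2 (hEq ▸ hql)
          exact Relation.ReflTransGen.head ⟨g'.1, hgq, rfl, rfl⟩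
            (claim (tgt g'.1) (hconn _ _) htg)
      · -- v' is an untouched vertex
        refine ⟨v'.1, ?_, ?_⟩
        · rw [card_tgt_eq hw hne hva, proj_self]
          exact hin'
        · rw [card_src_eq hw hne hva, proj_self]
          exact hout'


end RemovableAux

/-- Directed one-step relation of a multi-digraph, restricted to a set `A` of usable edges. -/
def DStepOn {M E : ℕ} (src tgt : Fin E → Fin M) (A : Set (Fin E)) (a b : Fin M) : Prop :=
  ∃ e ∈ A, src e = a ∧ tgt e = b

/-- A multi-digraph is abstract if it has no subdivision vertex, i.e. no vertex with
exactly one incoming and exactly one outgoing edge, these edges being distinct. -/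
def IsAbstract {M E : ℕ} (src tgt : Fin E → Fin M) : Prop :=
  ∀ v : Fin M,
    ¬ ((Finset.univ.filter (fun e => tgt e = v)).card = 1 ∧
       (Finset.univ.filter (fun e => src e = v)).card = 1 ∧
       Finset.univ.filter (fun e => tgt e = v) ≠ Finset.univ.filter (fun e => src e = v))

/-- a connected abstract multi-digraph with at least one edge has an edge
whose removal leaves it strongly connected. -/
theorem exists_removable_edge (M E : ℕ) (hE : 0 < E) (src tgt : Fin E → Fin M)
    (hconn : ∀ a b : Fin M, Relation.ReflTransGen (DStepOn src tgt Set.univ) a b)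
    (habs : IsAbstract src tgt) :
    ∃ e₀ : Fin E, ∀ a b : Fin M,
      Relation.ReflTransGen (DStepOn src tgt {e | e ≠ e₀}) a b := by
  classical
  by_contra hno
  push_neg at hno
  have hconn' : ∀ a b : Fin M, RemovableAux.Reach src tgt Set.univ a b := hconn
  have hmin : ∀ e : Fin E, ¬ RemovableAux.Reach src tgt {x | x ≠ e} (src e) (tgt e) := by
    intro e hre
    obtain ⟨a, b, hb⟩ := hno e
    exact hb (RemovableAux.splice hre (hconn' a b))
  obtain ⟨v, hv1, hv2⟩ := RemovableAux.key E (Fin M) (Fin E) src tgt (by simp) ⟨⟨0, hE⟩⟩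
    hconn' hmin
  obtain ⟨f, hf⟩ := Finset.card_eq_one.mp hv1
  obtain ⟨g, hg⟩ := Finset.card_eq_one.mp hv2
  have hftgt : tgt f = v := by
    have := Finset.mem_singleton_self f
    rw [← hf] at this
    exact (Finset.mem_filter.mp this).2
  have hgsrc : src g = v := by
    have := Finset.mem_singleton_self g
    rw [← hg] at this
    exact (Finset.mem_filter.mp this).2
  have hfg : f ≠ g := by
    rintro rfl
    refine hmin f ?_
    rw [show src f = tgt f from hgsrc.trans hftgt.symm]
  refine habs v ⟨hv1, hv2, ?_⟩
  rw [hf, hg]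
  intro h
  exact hfg (Finset.singleton_injective h)
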